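/- arXiv:2304.11334 — 5 statements merged into one kernel-verified Lean document; each statement's English description precedes it below -/
import Mathlib

section
/- Fix a real number c with 0 < c < 1, and define Q: [0,3-2c] × ℝ_{≥0} → ℝ as follows. For 0 ≤ u ≤ 1: Q(u,v) = 8c^2 + 4cu - v^2 - 20c - 4u + 12 if 0 ≤ v ≤ 2-2c; Q(u,v) = 4(1-c)(4-3c-u-v) if 2-2c ≤ v ≤ 3-2c-u; Q(u,v) = (5-4c-u-v)^2 if 3-2c-u ≤ v ≤ 5-4c-u. For 1 ≤ u ≤ 3-2c: Q(u,v) = 8c^2 + 4cu - v^2 - 20c - 4u + 12 if 0 ≤ v ≤ 3-2c-u; Q(u,v) = (3-2c-u)(7-6c-u-2v) if 3-2c-u ≤ v ≤ 2-2c; Q(u,v) = (5-4c-u-v)^2 if 2-2c ≤ v ≤ 5-4c-u. Then (3/(6(1-c)(3-2c)^2)) * ∫_0^{3-2c} ∫_0^{5-4c-u} Q(u,v) dv du = (6-5c)/3. -/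
open MeasureTheory

private lemma quad_int (α β γ a b : ℝ) :
    ∫ v in a..b, (α + β*v + γ*v^2) =
      (α*b + β*b^2/2 + γ*b^3/3) - (α*a + β*a^2/2 + γ*a^3/3) := by
  have h : ∀ x ∈ Set.uIcc a b,
      HasDerivAt (fun v => α*v + β*v^2/2 + γ*v^3/3) (α + β*x + γ*x^2) x := by
    intro x _
    have h2 : HasDerivAt (fun v : ℝ => α*v + β*v^2/2 + γ*v^3/3)
        (α*1 + β*(↑2*x^1)/2 + γ*(↑3*x^2)/3) x :=
      (((hasDerivAt_id x).const_mul α).add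
        (((hasDerivAt_pow 2 x).const_mul β).div_const 2)).add
        (((hasDerivAt_pow 3 x).const_mul γ).div_const 3)
    convert h2 using 1
    ring
  rw [intervalIntegral.integral_eq_sub_of_hasDerivAt h
    ((Continuous.intervalIntegrable (by continuity) a b))]

private lemma piece_int (f : ℝ → ℝ) (α β γ a b : ℝ) (hab : a ≤ b)
    (hfg : ∀ v, a ≤ v → v ≤ b → f v = α + β*v + γ*v^2) :
    IntervalIntegrable f volume a b ∧
    ∫ v in a..b, f v =
      (α*b + β*b^2/2 + γ*b^3/3) - (α*a + β*a^2/2 + γ*a^3/3) := by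
  have hs : Set.uIcc a b = Set.Icc a b := Set.uIcc_of_le hab
  have heq : Set.EqOn f (fun v => α + β*v + γ*v^2) (Set.uIcc a b) := by
    intro v hv
    rw [hs] at hv
    exact hfg v hv.1 hv.2
  have hcont : ContinuousOn f (Set.uIcc a b) :=
    ContinuousOn.congr (Continuous.continuousOn (by continuity)) heq
  refine ⟨hcont.intervalIntegrable, ?_⟩
  rw [intervalIntegral.integral_congr heq, quad_int]

theorem stmt_3 (c : ℝ) (hc0 : 0 < c) (hc1 : c < 1) (Q : ℝ → ℝ → ℝ)
    (hQ1 : ∀ u v, 0 ≤ u → u ≤ 1 → 0 ≤ v → v ≤ 2 - 2*c →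
      Q u v = 8*c^2 + 4*c*u - v^2 - 20*c - 4*u + 12)
    (hQ2 : ∀ u v, 0 ≤ u → u ≤ 1 → 2 - 2*c ≤ v → v ≤ 3 - 2*c - u →
      Q u v = 4 * (1 - c) * (4 - 3*c - u - v))
    (hQ3 : ∀ u v, 0 ≤ u → u ≤ 1 → 3 - 2*c - u ≤ v → v ≤ 5 - 4*c - u →
      Q u v = (5 - 4*c - u - v)^2)
    (hQ4 : ∀ u v, 1 ≤ u → u ≤ 3 - 2*c → 0 ≤ v → v ≤ 3 - 2*c - u →
      Q u v = 8*c^2 + 4*c*u - v^2 - 20*c - 4*u + 12)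
    (hQ5 : ∀ u v, 1 ≤ u → u ≤ 3 - 2*c → 3 - 2*c - u ≤ v → v ≤ 2 - 2*c →
      Q u v = (3 - 2*c - u) * (7 - 6*c - u - 2*v))
    (hQ6 : ∀ u v, 1 ≤ u → u ≤ 3 - 2*c → 2 - 2*c ≤ v → v ≤ 5 - 4*c - u →
      Q u v = (5 - 4*c - u - v)^2) :
    (3 / (6 * (1 - c) * (3 - 2*c)^2)) *
      (∫ u in (0:ℝ)..(3 - 2*c), ∫ v in (0:ℝ)..(5 - 4*c - u), Q u v) =
    (6 - 5*c) / 3 := by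
  have hinner : ∀ u, 0 ≤ u → u ≤ 3 - 2*c →
      (∫ v in (0:ℝ)..(5 - 4*c - u), Q u v) =
        (30 - 74*c + 60*c^2 - 16*c^3) + (-16 + 28*c - 12*c^2)*u + (2 - 2*c)*u^2 := by
    intro u hu0 hu3
    rcases le_or_gt u 1 with h1 | h1
    · obtain ⟨i1, e1⟩ := piece_int (Q u) (8*c^2 + 4*c*u - 20*c - 4*u + 12) 0 (-1)
        0 (2 - 2*c) (by linarith)
        (fun v hv1 hv2 => by rw [hQ1 u v hu0 h1 hv1 hv2]; ring)
      obtain ⟨i2, e2⟩ := piece_int (Q u) (4*(1 - c)*(4 - 3*c - u)) (-(4*(1 - c))) 0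
        (2 - 2*c) (3 - 2*c - u) (by linarith)
        (fun v hv1 hv2 => by rw [hQ2 u v hu0 h1 hv1 hv2]; ring)
      obtain ⟨i3, e3⟩ := piece_int (Q u) ((5 - 4*c - u)^2) (-(2*(5 - 4*c - u))) 1
        (3 - 2*c - u) (5 - 4*c - u) (by linarith)
        (fun v hv1 hv2 => by rw [hQ3 u v hu0 h1 hv1 hv2]; ring)
      have s1 := intervalIntegral.integral_add_adjacent_intervals i1 i2
      have s2 := intervalIntegral.integral_add_adjacent_intervals (i1.trans i2) i3
      rw [← s2, ← s1, e1, e2, e3]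
      ring
    · have h1' : 1 ≤ u := h1.le
      obtain ⟨i1, e1⟩ := piece_int (Q u) (8*c^2 + 4*c*u - 20*c - 4*u + 12) 0 (-1)
        0 (3 - 2*c - u) (by linarith)
        (fun v hv1 hv2 => by rw [hQ4 u v h1' hu3 hv1 hv2]; ring)
      obtain ⟨i2, e2⟩ := piece_int (Q u) ((3 - 2*c - u)*(7 - 6*c - u)) (-(2*(3 - 2*c - u))) 0
        (3 - 2*c - u) (2 - 2*c) (by linarith)
        (fun v hv1 hv2 => by rw [hQ5 u v h1' hu3 hv1 hv2]; ring)
      obtain ⟨i3, e3⟩ := piece_int (Q u) ((5 - 4*c - u)^2) (-(2*(5 - 4*c - u))) 1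
        (2 - 2*c) (5 - 4*c - u) (by linarith)
        (fun v hv1 hv2 => by rw [hQ6 u v h1' hu3 hv1 hv2]; ring)
      have s1 := intervalIntegral.integral_add_adjacent_intervals i1 i2
      have s2 := intervalIntegral.integral_add_adjacent_intervals (i1.trans i2) i3
      rw [← s2, ← s1, e1, e2, e3]
      ring
  obtain ⟨_, e⟩ := piece_int (fun u => ∫ v in (0:ℝ)..(5 - 4*c - u), Q u v)
      (30 - 74*c + 60*c^2 - 16*c^3) (-16 + 28*c - 12*c^2) (2 - 2*c)
      0 (3 - 2*c) (by linarith)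
      (fun u hu1 hu2 => hinner u hu1 hu2)
  rw [e]
  have hne1 : (1 - c) ≠ 0 := by intro h; nlinarith [h]
  have hne2 : (3 - 2*c) ≠ 0 := by intro h; nlinarith [h]
  rw [div_mul_eq_mul_div, div_eq_div_iff (mul_ne_zero (mul_ne_zero (by norm_num) hne1) (pow_ne_zero 2 hne2)) (by norm_num)]
  ring
end

section
/- Fix a real number c with 0 < c < 1, and define g: [0,3-2c] × ℝ_{≥0} → ℝ as follows. For 0 ≤ u ≤ 1: g(u,v) = v if 0 ≤ v ≤ 2-2c; g(u,v) = 2-2c if 2-2c ≤ v ≤ 3-2c-u; g(u,v) = 5-4c-u-v if 3-2c-u ≤ v ≤ 5-4c-u. For 1 ≤ u ≤ 3-2c: g(u,v) = v if 0 ≤ v ≤ 3-2c-u; g(u,v) = 3-2c-u if 3-2c-u ≤ v ≤ 2-2c; g(u,v) = 5-4c-u-v if 2-2c ≤ v ≤ 5-4c-u. Then (3/(6(1-c)(3-2c)^2)) * ∫_0^{3-2c} ∫_0^{5-4c-u} g(u,v)^2 dv du = 1 - c - 2(5-3c)(1-c)^2/(3(3-2c)^2). -/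
open MeasureTheory

private lemma my_ii {f p : ℝ → ℝ} {a b : ℝ} (hab : a ≤ b) (hp : Continuous p)
    (h : ∀ x ∈ Set.Icc a b, f x = p x) : IntervalIntegrable f volume a b := by
  rw [intervalIntegrable_iff_integrableOn_Icc_of_le hab]
  exact (hp.integrableOn_Icc).congr_fun (fun x hx => (h x hx).symm) measurableSet_Icc

private lemma poly_int (c0 c1 c2 c3 p q : ℝ) :
    (∫ x in p..q, (c0 + c1*x + c2*x^2 + c3*x^3)) =
      (c0*q + c1*q^2/2 + c2*q^3/3 + c3*q^4/4) -
      (c0*p + c1*p^2/2 + c2*p^3/3 + c3*p^4/4) := by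
  have h : ∀ x ∈ Set.uIcc p q,
      HasDerivAt (fun x => c0*x + c1*x^2/2 + c2*x^3/3 + c3*x^4/4)
        (c0 + c1*x + c2*x^2 + c3*x^3) x := by
    intro x _
    have h1 : HasDerivAt (fun x : ℝ => c0*x + c1*x^2/2 + c2*x^3/3 + c3*x^4/4)
        (c0*1 + c1*((2:ℕ)*x^(2-1))/2 + c2*((3:ℕ)*x^(3-1))/3 + c3*((4:ℕ)*x^(4-1))/4) x := by
      exact ((((hasDerivAt_id x).const_mul c0).add
        (((hasDerivAt_pow 2 x).const_mul c1).div_const 2)).add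
        (((hasDerivAt_pow 3 x).const_mul c2).div_const 3)).add
        (((hasDerivAt_pow 4 x).const_mul c3).div_const 4)
    convert h1 using 1
    push_cast
    ring
  rw [intervalIntegral.integral_eq_sub_of_hasDerivAt h
    (Continuous.intervalIntegrable (by fun_prop) p q)]

theorem stmt_4 (c : ℝ) (hc0 : 0 < c) (hc1 : c < 1) (g : ℝ → ℝ → ℝ)
    (hg1 : ∀ u v, 0 ≤ u → u ≤ 1 → 0 ≤ v → v ≤ 2 - 2*c → g u v = v)
    (hg2 : ∀ u v, 0 ≤ u → u ≤ 1 → 2 - 2*c ≤ v → v ≤ 3 - 2*c - u → g u v = 2 - 2*c)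
    (hg3 : ∀ u v, 0 ≤ u → u ≤ 1 → 3 - 2*c - u ≤ v → v ≤ 5 - 4*c - u →
      g u v = 5 - 4*c - u - v)
    (hg4 : ∀ u v, 1 ≤ u → u ≤ 3 - 2*c → 0 ≤ v → v ≤ 3 - 2*c - u → g u v = v)
    (hg5 : ∀ u v, 1 ≤ u → u ≤ 3 - 2*c → 3 - 2*c - u ≤ v → v ≤ 2 - 2*c →
      g u v = 3 - 2*c - u)
    (hg6 : ∀ u v, 1 ≤ u → u ≤ 3 - 2*c → 2 - 2*c ≤ v → v ≤ 5 - 4*c - u →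
      g u v = 5 - 4*c - u - v) :
    (3 / (6 * (1 - c) * (3 - 2*c)^2)) *
      (∫ u in (0:ℝ)..(3 - 2*c), ∫ v in (0:ℝ)..(5 - 4*c - u), (g u v)^2) =
    1 - c - 2 * (5 - 3*c) * (1 - c)^2 / (3 * (3 - 2*c)^2) := by
  have key1 : ∀ u, 0 ≤ u → u ≤ 1 →
      (∫ v in (0:ℝ)..(5 - 4*c - u), (g u v)^2)
        = 2*(2-2*c)^3/3 + (2-2*c)^2*(1-u) := by
    intro u h0 h1
    have hA : (0:ℝ) ≤ 2 - 2*c := by linarith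
    have hB : (2 - 2*c : ℝ) ≤ 3 - 2*c - u := by linarith
    have hT : (3 - 2*c - u : ℝ) ≤ 5 - 4*c - u := by linarith
    have i1 : IntervalIntegrable (fun v => (g u v)^2) volume 0 (2-2*c) :=
      my_ii hA (continuous_pow 2) (fun v hv => by
        show (g u v)^2 = v^2; rw [hg1 u v h0 h1 hv.1 hv.2])
    have i2 : IntervalIntegrable (fun v => (g u v)^2) volume (2-2*c) (3-2*c-u) :=
      my_ii hB (continuous_const : Continuous fun _ : ℝ => (2-2*c)^2) (fun v hv => by
        show (g u v)^2 = (2-2*c)^2; rw [hg2 u v h0 h1 hv.1 hv.2])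
    have i3 : IntervalIntegrable (fun v => (g u v)^2) volume (3-2*c-u) (5-4*c-u) :=
      my_ii hT ((by fun_prop : Continuous fun v : ℝ => (5-4*c-u-v)^2)) (fun v hv => by
        show (g u v)^2 = (5-4*c-u-v)^2; rw [hg3 u v h0 h1 hv.1 hv.2])
    rw [← intervalIntegral.integral_add_adjacent_intervals i1 (i2.trans i3),
        ← intervalIntegral.integral_add_adjacent_intervals i2 i3]
    have e1 : (∫ v in (0:ℝ)..(2-2*c), (g u v)^2)
        = ∫ v in (0:ℝ)..(2-2*c), ((0:ℝ) + 0*v + 1*v^2 + 0*v^3) := by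
      apply intervalIntegral.integral_congr
      intro v hv
      rw [Set.uIcc_of_le hA] at hv
      beta_reduce; rw [hg1 u v h0 h1 hv.1 hv.2]; ring
    have e2 : (∫ v in (2-2*c:ℝ)..(3-2*c-u), (g u v)^2)
        = ∫ v in (2-2*c:ℝ)..(3-2*c-u), ((2-2*c)^2 + 0*v + 0*v^2 + 0*v^3) := by
      apply intervalIntegral.integral_congr
      intro v hv
      rw [Set.uIcc_of_le hB] at hv
      beta_reduce; rw [hg2 u v h0 h1 hv.1 hv.2]; ring
    have e3 : (∫ v in (3-2*c-u:ℝ)..(5-4*c-u), (g u v)^2)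
        = ∫ v in (3-2*c-u:ℝ)..(5-4*c-u),
            ((5-4*c-u)^2 + (-2*(5-4*c-u))*v + 1*v^2 + 0*v^3) := by
      apply intervalIntegral.integral_congr
      intro v hv
      rw [Set.uIcc_of_le hT] at hv
      beta_reduce; rw [hg3 u v h0 h1 hv.1 hv.2]; ring
    rw [e1, e2, e3, poly_int, poly_int, poly_int]
    ring
  have key2 : ∀ u, 1 ≤ u → u ≤ 3 - 2*c →
      (∫ v in (0:ℝ)..(5 - 4*c - u), (g u v)^2)
        = (2-2*c)*(3-2*c-u)^2 - (3-2*c-u)^3/3 := by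
    intro u h0 h1
    have hA : (0:ℝ) ≤ 3 - 2*c - u := by linarith
    have hB : (3 - 2*c - u : ℝ) ≤ 2 - 2*c := by linarith
    have hT : (2 - 2*c : ℝ) ≤ 5 - 4*c - u := by linarith
    have i1 : IntervalIntegrable (fun v => (g u v)^2) volume 0 (3-2*c-u) :=
      my_ii hA (continuous_pow 2) (fun v hv => by
        show (g u v)^2 = v^2; rw [hg4 u v h0 h1 hv.1 hv.2])
    have i2 : IntervalIntegrable (fun v => (g u v)^2) volume (3-2*c-u) (2-2*c) :=
      my_ii hB (continuous_const : Continuous fun _ : ℝ => (3-2*c-u)^2) (fun v hv => by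
        show (g u v)^2 = (3-2*c-u)^2; rw [hg5 u v h0 h1 hv.1 hv.2])
    have i3 : IntervalIntegrable (fun v => (g u v)^2) volume (2-2*c) (5-4*c-u) :=
      my_ii hT ((by fun_prop : Continuous fun v : ℝ => (5-4*c-u-v)^2)) (fun v hv => by
        show (g u v)^2 = (5-4*c-u-v)^2; rw [hg6 u v h0 h1 hv.1 hv.2])
    rw [← intervalIntegral.integral_add_adjacent_intervals i1 (i2.trans i3),
        ← intervalIntegral.integral_add_adjacent_intervals i2 i3]
    have e1 : (∫ v in (0:ℝ)..(3-2*c-u), (g u v)^2)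
        = ∫ v in (0:ℝ)..(3-2*c-u), ((0:ℝ) + 0*v + 1*v^2 + 0*v^3) := by
      apply intervalIntegral.integral_congr
      intro v hv
      rw [Set.uIcc_of_le hA] at hv
      beta_reduce; rw [hg4 u v h0 h1 hv.1 hv.2]; ring
    have e2 : (∫ v in (3-2*c-u:ℝ)..(2-2*c), (g u v)^2)
        = ∫ v in (3-2*c-u:ℝ)..(2-2*c), ((3-2*c-u)^2 + 0*v + 0*v^2 + 0*v^3) := by
      apply intervalIntegral.integral_congr
      intro v hv
      rw [Set.uIcc_of_le hB] at hv
      beta_reduce; rw [hg5 u v h0 h1 hv.1 hv.2]; ring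
    have e3 : (∫ v in (2-2*c:ℝ)..(5-4*c-u), (g u v)^2)
        = ∫ v in (2-2*c:ℝ)..(5-4*c-u),
            ((5-4*c-u)^2 + (-2*(5-4*c-u))*v + 1*v^2 + 0*v^3) := by
      apply intervalIntegral.integral_congr
      intro v hv
      rw [Set.uIcc_of_le hT] at hv
      beta_reduce; rw [hg6 u v h0 h1 hv.1 hv.2]; ring
    rw [e1, e2, e3, poly_int, poly_int, poly_int]
    ring
  have hs : (1:ℝ) ≤ 3 - 2*c := by linarith
  have j1 : IntervalIntegrable
      (fun u => ∫ v in (0:ℝ)..(5 - 4*c - u), (g u v)^2) volume 0 1 :=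
    my_ii zero_le_one
      (by fun_prop : Continuous fun u : ℝ => 2*(2-2*c)^3/3 + (2-2*c)^2*(1-u))
      (fun u hu => key1 u hu.1 hu.2)
  have j2 : IntervalIntegrable
      (fun u => ∫ v in (0:ℝ)..(5 - 4*c - u), (g u v)^2) volume 1 (3-2*c) :=
    my_ii hs
      (by fun_prop : Continuous fun u : ℝ => (2-2*c)*(3-2*c-u)^2 - (3-2*c-u)^3/3)
      (fun u hu => key2 u hu.1 hu.2)
  rw [← intervalIntegral.integral_add_adjacent_intervals j1 j2]
  have E1 : (∫ u in (0:ℝ)..1, ∫ v in (0:ℝ)..(5 - 4*c - u), (g u v)^2)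
      = ∫ u in (0:ℝ)..1,
          ((2*(2-2*c)^3/3 + (2-2*c)^2) + (-(2-2*c)^2)*u + 0*u^2 + 0*u^3) := by
    apply intervalIntegral.integral_congr
    intro u hu
    rw [Set.uIcc_of_le zero_le_one] at hu
    beta_reduce; rw [key1 u hu.1 hu.2]; ring
  have E2 : (∫ u in (1:ℝ)..(3-2*c), ∫ v in (0:ℝ)..(5 - 4*c - u), (g u v)^2)
      = ∫ u in (1:ℝ)..(3-2*c),
          (((2-2*c)*(3-2*c)^2 - (3-2*c)^3/3)
            + (-2*(2-2*c)*(3-2*c) + (3-2*c)^2)*u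
            + ((2-2*c) - (3-2*c))*u^2 + (1/3)*u^3) := by
    apply intervalIntegral.integral_congr
    intro u hu
    rw [Set.uIcc_of_le hs] at hu
    beta_reduce; rw [key2 u hu.1 hu.2]; ring
  rw [E1, E2, poly_int, poly_int]
  have h1 : (1 - c) ≠ 0 := by linarith
  have h2 : (3 - 2*c) ≠ 0 := by linarith
  rw [div_mul_eq_mul_div, div_eq_iff (by positivity)]
  field_simp
  ring
end

section
/- Fix a real number c with 0 < c < 1, and define g: [0,3-2c] × ℝ_{≥0} → ℝ as follows. For 0 ≤ u ≤ 2-c: g(u,v) = v/2 if 0 ≤ v ≤ 2-2c; g(u,v) = 1-c if 2-2c ≤ v ≤ 6-4c-2u; g(u,v) = (8-6c-2u-v)/2 if 6-4c-2u ≤ v ≤ 8-6c-2u. For 2-c ≤ u ≤ 3-2c: g(u,v) = v/2 if 0 ≤ v ≤ 6-4c-2u; g(u,v) = 3-2c-u if 6-4c-2u ≤ v ≤ 2-2c; g(u,v) = (8-6c-2u-v)/2 if 2-2c ≤ v ≤ 8-6c-2u. Then (3/(6(1-c)(3-2c)^2)) * ∫_0^{3-2c} ∫_0^{8-6c-2u}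 g(u,v)^2 dv du = 1 - c - (1-c)(31c^2 - 90c + 65)/(12(3-2c)^2). -/
open MeasureTheory

lemma cubic_int (p q r s a b : ℝ) :
    (∫ x in a..b, (p + q*x + r*x^2 + s*x^3)) =
    p*(b-a) + q*(b^2-a^2)/2 + r*(b^3-a^3)/3 + s*(b^4-a^4)/4 := by
  have h1 : IntervalIntegrable (fun _ : ℝ => p) volume a b := intervalIntegrable_const
  have h2 : IntervalIntegrable (fun x : ℝ => q*x) volume a b :=
    (continuous_const.mul continuous_id).intervalIntegrable a b
  have h3 : IntervalIntegrable (fun x : ℝ => r*x^2) volume a b :=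
    (continuous_const.mul (continuous_pow 2)).intervalIntegrable a b
  have h4 : IntervalIntegrable (fun x : ℝ => s*x^3) volume a b :=
    (continuous_const.mul (continuous_pow 3)).intervalIntegrable a b
  rw [intervalIntegral.integral_add ((h1.add h2).add h3) h4,
      intervalIntegral.integral_add (h1.add h2) h3,
      intervalIntegral.integral_add h1 h2,
      intervalIntegral.integral_const, intervalIntegral.integral_const_mul,
      intervalIntegral.integral_const_mul, intervalIntegral.integral_const_mul,
      integral_id, integral_pow, integral_pow]
  push_cast [smul_eq_mul]
  ring

lemma congr_int {h f : ℝ → ℝ} {a b : ℝ} (hf : Continuous f)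
    (heq : ∀ x ∈ Set.uIcc a b, h x = f x) :
    IntervalIntegrable h volume a b ∧ (∫ x in a..b, h x) = ∫ x in a..b, f x := by
  refine ⟨(hf.intervalIntegrable a b).congr ?_, intervalIntegral.integral_congr heq⟩
  intro x hx
  exact (heq x (Set.uIoc_subset_uIcc hx)).symm

theorem stmt_6 (c : ℝ) (hc0 : 0 < c) (hc1 : c < 1) (g : ℝ → ℝ → ℝ)
    (hg1 : ∀ u v, 0 ≤ u → u ≤ 2 - c → 0 ≤ v → v ≤ 2 - 2*c → g u v = v / 2)
    (hg2 : ∀ u v, 0 ≤ u → u ≤ 2 - c → 2 - 2*c ≤ v → v ≤ 6 - 4*c - 2*u → g u v = 1 - c)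
    (hg3 : ∀ u v, 0 ≤ u → u ≤ 2 - c → 6 - 4*c - 2*u ≤ v → v ≤ 8 - 6*c - 2*u →
      g u v = (8 - 6*c - 2*u - v) / 2)
    (hg4 : ∀ u v, 2 - c ≤ u → u ≤ 3 - 2*c → 0 ≤ v → v ≤ 6 - 4*c - 2*u → g u v = v / 2)
    (hg5 : ∀ u v, 2 - c ≤ u → u ≤ 3 - 2*c → 6 - 4*c - 2*u ≤ v → v ≤ 2 - 2*c →
      g u v = 3 - 2*c - u)
    (hg6 : ∀ u v, 2 - c ≤ u → u ≤ 3 - 2*c → 2 - 2*c ≤ v → v ≤ 8 - 6*c - 2*u →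
      g u v = (8 - 6*c - 2*u - v) / 2) :
    (3 / (6 * (1 - c) * (3 - 2*c)^2)) *
      (∫ u in (0:ℝ)..(3 - 2*c), ∫ v in (0:ℝ)..(8 - 6*c - 2*u), (g u v)^2) =
    1 - c - (1 - c) * (31*c^2 - 90*c + 65) / (12 * (3 - 2*c)^2) := by
  have inner1 : ∀ u, 0 ≤ u → u ≤ 2 - c →
      (∫ v in (0:ℝ)..(8 - 6*c - 2*u), (g u v)^2)
        = 4*(1-c)^3/3 + (1-c)^2*(4-2*c-2*u) := by
    intro u h0 h2
    have o1 : (0:ℝ) ≤ 2-2*c := by linarith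
    have o2 : 2-2*c ≤ 6-4*c-2*u := by linarith
    have o3 : 6-4*c-2*u ≤ 8-6*c-2*u := by linarith
    obtain ⟨i1, e1⟩ := congr_int (h := fun v => (g u v)^2)
      (f := fun v => 0 + 0*v + (1/4)*v^2 + 0*v^3) (a := 0) (b := 2-2*c)
      (by fun_prop)
      (fun x hx => by
        rw [Set.uIcc_of_le o1] at hx
        beta_reduce
        rw [hg1 u x h0 h2 hx.1 hx.2]; ring)
    obtain ⟨i2, e2⟩ := congr_int (h := fun v => (g u v)^2)
      (f := fun v => (1-c)^2 + 0*v + 0*v^2 + 0*v^3) (a := 2-2*c) (b := 6-4*c-2*u)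
      (by fun_prop)
      (fun x hx => by
        rw [Set.uIcc_of_le o2] at hx
        beta_reduce
        rw [hg2 u x h0 h2 hx.1 hx.2]; ring)
    obtain ⟨i3, e3⟩ := congr_int (h := fun v => (g u v)^2)
      (f := fun v => (8-6*c-2*u)^2/4 + (-(8-6*c-2*u)/2)*v + (1/4)*v^2 + 0*v^3)
      (a := 6-4*c-2*u) (b := 8-6*c-2*u)
      (by fun_prop)
      (fun x hx => by
        rw [Set.uIcc_of_le o3] at hx
        beta_reduce
        rw [hg3 u x h0 h2 hx.1 hx.2]; ring)
    rw [← intervalIntegral.integral_add_adjacent_intervals i1 (i2.trans i3),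
        ← intervalIntegral.integral_add_adjacent_intervals i2 i3,
        e1, e2, e3, cubic_int, cubic_int, cubic_int]
    ring
  have inner2 : ∀ u, 2 - c ≤ u → u ≤ 3 - 2*c →
      (∫ v in (0:ℝ)..(8 - 6*c - 2*u), (g u v)^2)
        = 2*(1-c)*(3-2*c-u)^2 - 2*(3-2*c-u)^3/3 := by
    intro u h0 h2
    have o1 : (0:ℝ) ≤ 6-4*c-2*u := by linarith
    have o2 : 6-4*c-2*u ≤ 2-2*c := by linarith
    have o3 : 2-2*c ≤ 8-6*c-2*u := by linarith
    obtain ⟨i1, e1⟩ := congr_int (h := fun v => (g u v)^2)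
      (f := fun v => 0 + 0*v + (1/4)*v^2 + 0*v^3) (a := 0) (b := 6-4*c-2*u)
      (by fun_prop)
      (fun x hx => by
        rw [Set.uIcc_of_le o1] at hx
        beta_reduce
        rw [hg4 u x h0 h2 hx.1 hx.2]; ring)
    obtain ⟨i2, e2⟩ := congr_int (h := fun v => (g u v)^2)
      (f := fun v => (3-2*c-u)^2 + 0*v + 0*v^2 + 0*v^3) (a := 6-4*c-2*u) (b := 2-2*c)
      (by fun_prop)
      (fun x hx => by
        rw [Set.uIcc_of_le o2] at hx
        beta_reduce
        rw [hg5 u x h0 h2 hx.1 hx.2]; ring)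
    obtain ⟨i3, e3⟩ := congr_int (h := fun v => (g u v)^2)
      (f := fun v => (8-6*c-2*u)^2/4 + (-(8-6*c-2*u)/2)*v + (1/4)*v^2 + 0*v^3)
      (a := 2-2*c) (b := 8-6*c-2*u)
      (by fun_prop)
      (fun x hx => by
        rw [Set.uIcc_of_le o3] at hx
        beta_reduce
        rw [hg6 u x h0 h2 hx.1 hx.2]; ring)
    rw [← intervalIntegral.integral_add_adjacent_intervals i1 (i2.trans i3),
        ← intervalIntegral.integral_add_adjacent_intervals i2 i3,
        e1, e2, e3, cubic_int, cubic_int, cubic_int]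
    ring
  have ou1 : (0:ℝ) ≤ 2-c := by linarith
  have ou2 : 2-c ≤ 3-2*c := by linarith
  obtain ⟨I1, E1⟩ := congr_int
    (h := fun u => ∫ v in (0:ℝ)..(8 - 6*c - 2*u), (g u v)^2)
    (f := fun u => (4*(1-c)^3/3 + (1-c)^2*(4-2*c)) + (-(2*(1-c)^2))*u + 0*u^2 + 0*u^3)
    (a := 0) (b := 2-c) (by fun_prop)
    (fun x hx => by
      rw [Set.uIcc_of_le ou1] at hx
      beta_reduce
      rw [inner1 x hx.1 hx.2]; ring)
  obtain ⟨I2, E2⟩ := congr_int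
    (h := fun u => ∫ v in (0:ℝ)..(8 - 6*c - 2*u), (g u v)^2)
    (f := fun u => (2*(1-c)*(3-2*c)^2 - 2*(3-2*c)^3/3)
      + (-4*(1-c)*(3-2*c) + 2*(3-2*c)^2)*u + (2*(1-c) - 2*(3-2*c))*u^2 + (2/3)*u^3)
    (a := 2-c) (b := 3-2*c) (by fun_prop)
    (fun x hx => by
      rw [Set.uIcc_of_le ou2] at hx
      beta_reduce
      rw [inner2 x hx.1 hx.2]; ring)
  rw [← intervalIntegral.integral_add_adjacent_intervals I1 I2, E1, E2,
      cubic_int, cubic_int]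
  have h1c : (1:ℝ) - c ≠ 0 := by linarith
  have h3c : (3:ℝ) - 2*c ≠ 0 := by nlinarith
  have h3c' : (3:ℝ) - c*2 ≠ 0 := by linarith
  field_simp
  ring
end

section
/- Define Q: [0,2] × ℝ_{≥0} → ℝ as follows. For 0 ≤ u ≤ 1: Q(u,v) = 2 - v^2 if 0 ≤ v ≤ 1; Q(u,v) = (2-v)^2 if 1 ≤ v ≤ 2. For 1 ≤ u ≤ 2: Q(u,v) = 4 - 2u - v^2 if 0 ≤ v ≤ 2-u; Q(u,v) = (2-u)(4-u-2v) if 2-u ≤ v ≤ 1; Q(u,v) = (3-u-v)^2 if 1 ≤ v ≤ 3-u. Then (1/3) * (∫_0^1 ∫_0^2 Q(u,v) dv du + ∫_1^2 ∫_0^{3-u} Q(u,v) dv du) = 17/18. -/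
open MeasureTheory

lemma intpoly (c0 c1 c2 a b : ℝ) :
    ∫ x in a..b, (c0 + c1*x + c2*x^2) =
      (c0*b + c1*b^2/2 + c2*b^3/3) - (c0*a + c1*a^2/2 + c2*a^3/3) := by
  have h : ∀ x ∈ Set.uIcc a b,
      HasDerivAt (fun x => c0*x + c1*x^2/2 + c2*x^3/3) (c0 + c1*x + c2*x^2) x := by
    intro x _
    have h1 := (((hasDerivAt_id x).const_mul c0).add
      ((((hasDerivAt_pow 2 x).const_mul c1).div_const 2).add
        (((hasDerivAt_pow 3 x).const_mul c2).div_const 3)))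
    refine (h1.congr_deriv (by push_cast; ring_nf)).congr_of_eventuallyEq
      (Filter.Eventually.of_forall fun y => ?_)
    simp only [Pi.add_apply, id]; ring
  rw [intervalIntegral.integral_eq_sub_of_hasDerivAt h
    ((by continuity : Continuous fun x : ℝ => c0 + c1*x + c2*x^2).intervalIntegrable a b)]

lemma ipoly (c0 c1 c2 a b : ℝ) :
    IntervalIntegrable (fun x => c0 + c1*x + c2*x^2) volume a b :=
  (by continuity : Continuous fun x : ℝ => c0 + c1*x + c2*x^2).intervalIntegrable a b

lemma II {f g : ℝ → ℝ} {a b : ℝ} (hfg : Set.EqOn f g (Set.uIcc a b))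
    (hg : IntervalIntegrable g volume a b) : IntervalIntegrable f volume a b :=
  hg.congr fun x hx => (hfg (Set.Ioc_subset_Icc_self hx)).symm

theorem stmt_13 (Q : ℝ → ℝ → ℝ)
    (hQ1 : ∀ u v, 0 ≤ u → u ≤ 1 → 0 ≤ v → v ≤ 1 → Q u v = 2 - v^2)
    (hQ2 : ∀ u v, 0 ≤ u → u ≤ 1 → 1 ≤ v → v ≤ 2 → Q u v = (2 - v)^2)
    (hQ3 : ∀ u v, 1 ≤ u → u ≤ 2 → 0 ≤ v → v ≤ 2 - u → Q u v = 4 - 2*u - v^2)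
    (hQ4 : ∀ u v, 1 ≤ u → u ≤ 2 → 2 - u ≤ v → v ≤ 1 → Q u v = (2 - u) * (4 - u - 2*v))
    (hQ5 : ∀ u v, 1 ≤ u → u ≤ 2 → 1 ≤ v → v ≤ 3 - u → Q u v = (3 - u - v)^2) :
    (1/3 : ℝ) * ((∫ u in (0:ℝ)..1, ∫ v in (0:ℝ)..2, Q u v) +
        ∫ u in (1:ℝ)..2, ∫ v in (0:ℝ)..(3 - u), Q u v) = 17/18 := by
  have key1 : ∀ u ∈ Set.uIcc (0:ℝ) 1, (∫ v in (0:ℝ)..2, Q u v) = 2 := by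
    intro u hu
    rw [Set.uIcc_of_le (by norm_num)] at hu
    have e1 : Set.EqOn (Q u) (fun v => 2 + 0*v + (-1)*v^2) (Set.uIcc 0 1) := by
      intro v hv
      rw [Set.uIcc_of_le (by norm_num)] at hv
      rw [hQ1 u v hu.1 hu.2 hv.1 hv.2]; ring
    have e2 : Set.EqOn (Q u) (fun v => 4 + (-4)*v + 1*v^2) (Set.uIcc 1 2) := by
      intro v hv
      rw [Set.uIcc_of_le (by norm_num)] at hv
      rw [hQ2 u v hu.1 hu.2 hv.1 hv.2]; ring
    rw [← intervalIntegral.integral_add_adjacent_intervals (II e1 (ipoly _ _ _ _ _))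
        (II e2 (ipoly _ _ _ _ _)),
      intervalIntegral.integral_congr e1, intervalIntegral.integral_congr e2,
      intpoly, intpoly]
    norm_num
  have key2 : ∀ u ∈ Set.uIcc (1:ℝ) 2,
      (∫ v in (0:ℝ)..(3 - u), Q u v) = 6 + (-5)*u + 1*u^2 := by
    intro u hu
    rw [Set.uIcc_of_le (by norm_num)] at hu
    have e1 : Set.EqOn (Q u) (fun v => (4 - 2*u) + 0*v + (-1)*v^2) (Set.uIcc 0 (2 - u)) := by
      intro v hv
      rw [Set.uIcc_of_le (by linarith [hu.2])] at hv
      rw [hQ3 u v hu.1 hu.2 hv.1 hv.2]; ring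
    have e2 : Set.EqOn (Q u) (fun v => ((2-u)*(4-u)) + (-2*(2-u))*v + 0*v^2)
        (Set.uIcc (2 - u) 1) := by
      intro v hv
      rw [Set.uIcc_of_le (by linarith [hu.1])] at hv
      rw [hQ4 u v hu.1 hu.2 hv.1 hv.2]; ring
    have e3 : Set.EqOn (Q u) (fun v => ((3-u)^2) + (-2*(3-u))*v + 1*v^2)
        (Set.uIcc 1 (3 - u)) := by
      intro v hv
      rw [Set.uIcc_of_le (by linarith [hu.2])] at hv
      rw [hQ5 u v hu.1 hu.2 hv.1 hv.2]; ring
    rw [← intervalIntegral.integral_add_adjacent_intervals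
        (IntervalIntegrable.trans (II e1 (ipoly _ _ _ _ _)) (II e2 (ipoly _ _ _ _ _)))
        (II e3 (ipoly _ _ _ _ _)),
      ← intervalIntegral.integral_add_adjacent_intervals (II e1 (ipoly _ _ _ _ _))
        (II e2 (ipoly _ _ _ _ _)),
      intervalIntegral.integral_congr e1, intervalIntegral.integral_congr e2,
      intervalIntegral.integral_congr e3, intpoly, intpoly, intpoly]
    ring
  have o1 : Set.EqOn (fun u => ∫ v in (0:ℝ)..2, Q u v)
      (fun u => 2 + 0*u + 0*u^2) (Set.uIcc 0 1) := by
    intro u hu; simp [key1 u hu]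
  have o2 : Set.EqOn (fun u => ∫ v in (0:ℝ)..(3 - u), Q u v)
      (fun u => 6 + (-5)*u + 1*u^2) (Set.uIcc 1 2) := by
    intro u hu; exact key2 u hu
  rw [intervalIntegral.integral_congr o1, intervalIntegral.integral_congr o2,
    intpoly, intpoly]
  norm_num
end

section
/- Let P = {(x₁,x₂,x₃) ∈ ℝ³ : -1 ≤ x₁ ≤ 0, -2 ≤ x₂, x₂ ≤ x₃, -1 ≤ x₃ ≤ 0}. Then the minimum over P of the linear functional 2x₁ + 4x₂ - x₃ equals -10, and 10 + (6/9) ∫_P (2x₁ + 4x₂ - x₃) dx₁dx₂dx₃ = 41/9. -/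
open MeasureTheory Set

-- innermost integral over y
lemma int_y (x z : ℝ) (hz : (-2:ℝ) ≤ z) :
    ∫ y in Set.Icc (-2:ℝ) z, (2*x + 4*y - z) = (z+2)*(2*x - z) + 2*z^2 - 8 := by
  rw [MeasureTheory.integral_Icc_eq_integral_Ioc, ← intervalIntegral.integral_of_le hz]
  have hF : ∀ y ∈ Set.uIcc (-2:ℝ) z, HasDerivAt (fun y => (2*x - z)*y + 2*y^2)
      (2*x + 4*y - z) y := by
    intro y _
    have h1 := (hasDerivAt_id y).const_mul (2*x - z)
    have h2 := (hasDerivAt_pow 2 y).const_mul (2:ℝ)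
    refine (h1.add h2).congr_deriv ?_
    ring
  rw [intervalIntegral.integral_eq_sub_of_hasDerivAt hF
    ((Continuous.intervalIntegrable (by continuity) _ _))]
  ring

lemma int_z (x : ℝ) :
    ∫ z in Set.Icc (-1:ℝ) 0, ((z+2)*(2*x - z) + 2*z^2 - 8) = 3*x - 20/3 := by
  rw [MeasureTheory.integral_Icc_eq_integral_Ioc,
    ← intervalIntegral.integral_of_le (by norm_num : (-1:ℝ) ≤ 0)]
  have hF : ∀ z ∈ Set.uIcc (-1:ℝ) 0, HasDerivAt (fun z => z^3/3 + (x-1)*z^2 + (4*x-8)*z)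
      ((z+2)*(2*x - z) + 2*z^2 - 8) z := by
    intro z _
    have h1 := (hasDerivAt_pow 3 z).div_const 3
    have h2 := (hasDerivAt_pow 2 z).const_mul (x-1)
    have h3 := (hasDerivAt_id z).const_mul (4*x-8)
    refine ((h1.add h2).add h3).congr_deriv ?_
    ring
  rw [intervalIntegral.integral_eq_sub_of_hasDerivAt hF
    ((Continuous.intervalIntegrable (by continuity) _ _))]
  norm_num
  linarith

lemma int_x : ∫ x in Set.Icc (-1:ℝ) 0, (3*x - 20/3) = -49/6 := by
  rw [MeasureTheory.integral_Icc_eq_integral_Ioc,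
    ← intervalIntegral.integral_of_le (by norm_num : (-1:ℝ) ≤ 0)]
  have hF : ∀ x ∈ Set.uIcc (-1:ℝ) 0, HasDerivAt (fun x => 3*x^2/2 - 20/3*x)
      (3*x - 20/3) x := by
    intro x _
    have h1 := ((hasDerivAt_pow 2 x).const_mul (3:ℝ)).div_const 2
    have h2 := (hasDerivAt_id x).const_mul (20/3:ℝ)
    refine (h1.sub h2).congr_deriv ?_
    ring
  rw [intervalIntegral.integral_eq_sub_of_hasDerivAt hF
    ((Continuous.intervalIntegrable (by continuity) _ _))]
  norm_num

-- the region Q in the (y,z)-plane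
noncomputable def Qset : Set (ℝ × ℝ) :=
  {q | -2 ≤ q.1 ∧ q.1 ≤ q.2 ∧ -1 ≤ q.2 ∧ q.2 ≤ 0}

lemma Qset_meas : MeasurableSet Qset := by
  unfold Qset
  apply MeasurableSet.inter
  · exact measurableSet_le measurable_const measurable_fst
  apply MeasurableSet.inter
  · exact measurableSet_le measurable_fst measurable_snd
  apply MeasurableSet.inter
  · exact measurableSet_le measurable_const measurable_snd
  · exact measurableSet_le measurable_snd measurable_const

lemma Qset_sub : Qset ⊆ Set.Icc ((-2:ℝ), (-1:ℝ)) (0, 0) := by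
  rintro ⟨y, z⟩ ⟨h1, h2, h3, h4⟩
  simp only [Set.mem_Icc, Prod.mk_le_mk]
  refine ⟨⟨h1, h3⟩, ⟨by linarith, h4⟩⟩

lemma QintOn (x : ℝ) : IntegrableOn (fun q : ℝ × ℝ => 2*x + 4*q.1 - q.2) Qset := by
  apply IntegrableOn.mono_set _ Qset_sub
  exact (Continuous.integrableOn_Icc (by continuity))

lemma int_Q (x : ℝ) : ∫ q in Qset, (2*x + 4*q.1 - q.2) = 3*x - 20/3 := by
  rw [← MeasureTheory.integral_indicator Qset_meas]
  rw [MeasureTheory.Measure.volume_eq_prod]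
  rw [MeasureTheory.integral_prod_symm]
  · have key : ∀ z : ℝ, (∫ y, Qset.indicator (fun q : ℝ × ℝ => 2*x + 4*q.1 - q.2) (y, z))
        = (Set.Icc (-1:ℝ) 0).indicator (fun z => (z+2)*(2*x - z) + 2*z^2 - 8) z := by
      intro z
      by_cases hz : z ∈ Set.Icc (-1:ℝ) 0
      · obtain ⟨hz1, hz2⟩ := hz
        have heq : (fun y => Qset.indicator (fun q : ℝ × ℝ => 2*x + 4*q.1 - q.2) (y, z))
            = (Set.Icc (-2:ℝ) z).indicator (fun y => 2*x + 4*y - z) := by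
          funext y
          by_cases hy : y ∈ Set.Icc (-2:ℝ) z
          · rw [Set.indicator_of_mem hy, Set.indicator_of_mem]
            exact ⟨hy.1, hy.2, hz1, hz2⟩
          · rw [Set.indicator_of_notMem hy, Set.indicator_of_notMem]
            intro hmem
            exact hy ⟨hmem.1, hmem.2.1⟩
        rw [heq, MeasureTheory.integral_indicator measurableSet_Icc,
          int_y x z (by linarith), Set.indicator_of_mem (Set.mem_Icc.mpr ⟨hz1, hz2⟩)]
      · rw [Set.indicator_of_notMem hz]
        have heq : (fun y => Qset.indicator (fun q : ℝ × ℝ => 2*x + 4*q.1 - q.2) (y, z))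
            = fun _ => (0:ℝ) := by
          funext y
          apply Set.indicator_of_notMem
          intro hmem
          exact hz ⟨hmem.2.2.1, hmem.2.2.2⟩
        rw [heq, integral_zero]
    simp_rw [key]
    rw [MeasureTheory.integral_indicator measurableSet_Icc, int_z]
  · rw [← MeasureTheory.Measure.volume_eq_prod]
    exact (integrable_indicator_iff Qset_meas).2 (QintOn x)

lemma Psub : (Set.Icc (-1:ℝ) 0) ×ˢ Qset ⊆
    Set.Icc ((-1:ℝ), ((-2:ℝ), (-1:ℝ))) (0, (0, 0)) := by
  rintro ⟨a, b, c⟩ ⟨ha, hq⟩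
  obtain ⟨h1, h2, h3, h4⟩ := hq
  simp only [Set.mem_Icc, Prod.mk_le_mk] at *
  exact ⟨⟨ha.1, h1, h3⟩, ha.2, by linarith, h4⟩

lemma key_integral :
    (∫ p in {p : ℝ × ℝ × ℝ | -1 ≤ p.1 ∧ p.1 ≤ 0 ∧ -2 ≤ p.2.1 ∧ p.2.1 ≤ p.2.2 ∧
      -1 ≤ p.2.2 ∧ p.2.2 ≤ 0}, (2 * p.1 + 4 * p.2.1 - p.2.2)) = -49/6 := by
  have hPeq : {p : ℝ × ℝ × ℝ | -1 ≤ p.1 ∧ p.1 ≤ 0 ∧ -2 ≤ p.2.1 ∧ p.2.1 ≤ p.2.2 ∧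
      -1 ≤ p.2.2 ∧ p.2.2 ≤ 0} = (Set.Icc (-1:ℝ) 0) ×ˢ Qset := by
    ext ⟨a, b, c⟩
    simp only [Set.mem_setOf_eq, Set.mem_prod, Set.mem_Icc, Qset]
    tauto
  rw [hPeq, MeasureTheory.Measure.volume_eq_prod, MeasureTheory.setIntegral_prod]
  · simp_rw [int_Q]
    exact int_x
  · rw [← MeasureTheory.Measure.volume_eq_prod]
    apply IntegrableOn.mono_set _ Psub
    exact (Continuous.integrableOn_Icc (by fun_prop))

theorem stmt_16 :
    let P : Set (ℝ × ℝ × ℝ) :=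
      {p | -1 ≤ p.1 ∧ p.1 ≤ 0 ∧ -2 ≤ p.2.1 ∧ p.2.1 ≤ p.2.2 ∧ -1 ≤ p.2.2 ∧ p.2.2 ≤ 0}
    IsLeast ((fun p : ℝ × ℝ × ℝ => 2 * p.1 + 4 * p.2.1 - p.2.2) '' P) (-10) ∧
    (10 : ℝ) + (6/9) * ∫ p in P, (2 * p.1 + 4 * p.2.1 - p.2.2) = 41/9 := by
  intro P
  have hP : P = {p : ℝ × ℝ × ℝ | -1 ≤ p.1 ∧ p.1 ≤ 0 ∧ -2 ≤ p.2.1 ∧ p.2.1 ≤ p.2.2 ∧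
      -1 ≤ p.2.2 ∧ p.2.2 ≤ 0} := rfl
  constructor
  · constructor
    · exact ⟨(-1, -2, 0), by norm_num [hP, Set.mem_setOf_eq], by norm_num⟩
    · rintro v ⟨p, hp, rfl⟩
      rw [hP] at hp
      obtain ⟨h1, h2, h3, h4, h5, h6⟩ := hp
      simp only
      linarith
  · rw [hP, key_integral]
    norm_num
end
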